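/- If M is a π-Rickart module satisfying condition C₂ (every submodule of M isomorphic to a direct summand of M is itself a direct summand), then M is dual π-Rickart. -/

import Mathlib

/-- A π-Rickart module with the C₂ condition is dual π-Rickart. -/
theorem dualPiRickart_of_piRickart_of_C2
    {R M : Type*} [Ring R] [AddCommGroup M] [Module R M]
    (hpr : ∀ f : Module.End R M, ∃ (e : Module.End R M) (n : ℕ),
      0 < n ∧ IsIdempotentElem e ∧ LinearMap.ker (f ^ n) = LinearMap.range e)
    (hC2 : ∀ N K P : Submodule R M, IsCompl K P → Nonempty (N ≃ₗ[R] K) →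
      ∃ Q : Submodule R M, IsCompl N Q) :
    ∀ f : Module.End R M, ∃ (e : Module.End R M) (n : ℕ),
      0 < n ∧ IsIdempotentElem e ∧ LinearMap.range (f ^ n) = LinearMap.range e := by
  intro f
  obtain ⟨e, n, hn, he, hker⟩ := hpr f
  -- e is a projection onto its range
  have hproj : LinearMap.IsProj (LinearMap.range e) e := by
    refine ⟨fun x => LinearMap.mem_range_self e x, ?_⟩
    rintro x ⟨y, rfl⟩
    exact congrFun (congrArg DFunLike.coe he) y
  have hcompl : IsCompl (LinearMap.ker e) (LinearMap.range e) := hproj.isCompl.symm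
  -- f^n restricted to ker e
  set g : LinearMap.ker e →ₗ[R] M := (f ^ n).comp (LinearMap.ker e).subtype with hg
  have hginj : Function.Injective g := by
    rw [← LinearMap.ker_eq_bot]
    ext ⟨x, hx⟩
    simp only [LinearMap.mem_ker, Submodule.mem_bot, hg, LinearMap.comp_apply,
      Submodule.coe_subtype]
    constructor
    · intro h
      have : x ∈ LinearMap.ker (f ^ n) := h
      rw [hker] at this
      have : x ∈ LinearMap.range e ⊓ LinearMap.ker e := ⟨this, hx⟩
      rw [hcompl.symm.inf_eq_bot] at this
      exact Subtype.ext this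
    · intro h
      have : x = 0 := congrArg Subtype.val h
      simp [this]
  -- range g = range (f^n)
  have hrg : LinearMap.range g = LinearMap.range (f ^ n) := by
    apply le_antisymm
    · rintro _ ⟨x, rfl⟩
      exact ⟨x, rfl⟩
    · rintro _ ⟨x, rfl⟩
      have hx : x ∈ LinearMap.ker e ⊔ LinearMap.range e := by
        rw [hcompl.sup_eq_top]; trivial
      obtain ⟨a, ha, b, hb, rfl⟩ := Submodule.mem_sup.mp hx
      refine ⟨⟨a, ha⟩, ?_⟩
      have hb' : (f ^ n) b = 0 := by
        have : b ∈ LinearMap.ker (f ^ n) := hker ▸ hb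
        exact this
      simp [hg, map_add, hb']
  -- range (f^n) ≅ ker e
  have hiso : Nonempty (LinearMap.range (f ^ n) ≃ₗ[R] LinearMap.ker e) := by
    have := LinearEquiv.ofInjective g hginj
    exact ⟨(LinearEquiv.ofEq _ _ hrg.symm).trans this.symm⟩
  obtain ⟨Q, hQ⟩ := hC2 (LinearMap.range (f ^ n)) (LinearMap.ker e) (LinearMap.range e)
    hcompl hiso
  -- build idempotent with range = range (f^n)
  set N := LinearMap.range (f ^ n)
  set p : M →ₗ[R] N := N.projectionOnto Q hQ
  refine ⟨N.subtype ∘ₗ p, n, hn, ?_, ?_⟩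
  · apply LinearMap.ext
    intro x
    simp [p, Submodule.projectionOnto_apply_left]
  · apply le_antisymm
    · rintro _ ⟨x, rfl⟩
      refine ⟨(f ^ n) x, ?_⟩
      have := congrArg Subtype.val
        (Submodule.projectionOnto_apply_left hQ ⟨(f ^ n) x, ⟨x, rfl⟩⟩)
      simpa [p] using this
    · rintro _ ⟨x, rfl⟩
      exact (p x).2
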